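/- arXiv:0807.1329 — 4 statements merged into one kernel-verified Lean document; each statement's English description precedes it below -/
import Mathlib

section
/- Let F : C ⥤ D be a functor between categories which admits an ambidextrous adjunction. Then the group of natural automorphisms of F acts freely and transitively on the set of isomorphism classes of ambidextrous adjunctions for F by twisting the left-adjoint structure: for any two ambidextrous adjunctions A₁ = ⟨F₁, η₁, ε₁, n₁, e₁⟩ and A₂ = ⟨F₂, η₂, ε₂, n₂, e₂⟩ for F there exists exactly one natural automorphism α : F ≅ F such that the twist of A₁ by α — the ambidextrous adjunction ⟨F₁, η₁, ε₁, n₁ composed with α whiskered on the F factor, e₁ precomposed with α⁻¹ whiskered on the F factor⟩ — admits a morphism of ambidextrous adjunctions to A₂. -/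
open CategoryTheory

/-- An ambidextrous adjunction for a functor `F : C ⥤ D`: a functor `F* : D ⥤ C` together
with an adjunction `F ⊣ F*` (with unit `η` and counit `ε`) and an adjunction `F* ⊣ F`
(with unit `n` and counit `e`). -/
structure AmbidextrousAdjunction {C D : Type*} [Category C] [Category D] (F : C ⥤ D) where
  /-- the ambidextrous adjoint `F*` -/
  right : D ⥤ C
  /-- the adjunction `F ⊣ F*`, bundling the unit `η` and counit `ε` -/
  adj : F ⊣ right
  /-- the adjunction `F* ⊣ F`, bundling the unit `n` and counit `e` -/
  coadj : right ⊣ F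

section AuxAmbi

variable {C D : Type*} [Category C] [Category D]

/-- Transport of a `G₂ ⊣ F` adjunction along an iso `γ : G₁ ≅ G₂` to a `G₁ ⊣ F` adjunction,
with explicit unit and counit. -/
def twistCoadj {F : C ⥤ D} {G₁ G₂ : D ⥤ C} (coadj₂ : G₂ ⊣ F) (γ : G₁ ≅ G₂) : G₁ ⊣ F where
  unit := coadj₂.unit ≫ Functor.whiskerRight γ.inv F
  counit := Functor.whiskerLeft F γ.hom ≫ coadj₂.counit
  left_triangle_components X := by
    simp only [NatTrans.comp_app, Functor.whiskerRight_app, Functor.whiskerLeft_app, Functor.map_comp,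
      Category.assoc, Functor.id_obj, Functor.comp_obj]
    rw [γ.hom.naturality_assoc (F.map (γ.inv.app X)),
      coadj₂.counit_naturality (γ.inv.app X)]
    have h := γ.hom.naturality (coadj₂.unit.app X)
    simp only [Functor.id_obj, Functor.id_map, Functor.comp_obj, Functor.comp_map] at h
    rw [reassoc_of% h]
    simp [coadj₂.left_triangle_components]
  right_triangle_components Y := by
    simp only [NatTrans.comp_app, Functor.whiskerRight_app, Functor.whiskerLeft_app, Functor.map_comp,
      Category.assoc, Functor.id_obj, Functor.comp_obj]
    rw [← Functor.map_comp_assoc, Iso.inv_hom_id_app]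
    simp [coadj₂.right_triangle_components]

/-- A natural transformation between two right adjoints of `F` which intertwines the units is
uniquely determined. -/
lemma aux_right_adj_nat_eq {F : C ⥤ D} {G₁ G₂ : D ⥤ C} (adj₁ : F ⊣ G₁) (adj₂ : F ⊣ G₂)
    (t : G₁ ⟶ G₂) (h : adj₂.unit = adj₁.unit ≫ Functor.whiskerLeft F t) (d : D) :
    t.app d = adj₂.unit.app (G₁.obj d) ≫ G₂.map (adj₁.counit.app d) := by
  rw [h]
  simp only [NatTrans.comp_app, Functor.whiskerLeft_app, Category.assoc]
  have ht := t.naturality (adj₁.counit.app d)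
  simp only [Functor.comp_obj, Functor.comp_map, Functor.id_obj] at ht
  rw [← ht, ← Category.assoc, adj₁.right_triangle_components d]
  simp

/-- A natural endomorphism of `F` is determined by its components at objects `G₁.obj d`
whenever `G₁ ⊣ F`. -/
lemma aux_self_nat_eq {F : C ⥤ D} {G₁ : D ⥤ C} (coadj₁ : G₁ ⊣ F) (s : F ⟶ F) (X : C) :
    s.app X = coadj₁.unit.app (F.obj X) ≫ s.app (G₁.obj (F.obj X)) ≫
      F.map (coadj₁.counit.app X) := by
  have hs := s.naturality (coadj₁.counit.app X)
  simp only [Functor.comp_obj, Functor.id_obj] at hs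
  rw [← hs, ← Category.assoc, coadj₁.right_triangle_components X]
  simp

end AuxAmbi

/-- **Free and transitive action of `Aut(F)` on classes of ambidextrous adjunctions.**
Given two ambidextrous adjunctions `A₁ = ⟨F₁, η₁, ε₁, n₁, e₁⟩` and `A₂ = ⟨F₂, η₂, ε₂, n₂, e₂⟩`
for `F`, there is exactly one natural automorphism `α : F ≅ F` such that the twist of `A₁`
by `α` — obtained by replacing `n₁` by its composite with `α` whiskered on the `F` factor and
`e₁` by its precomposite with `α⁻¹` whiskered on the `F` factor — admits a morphism of
ambidextrous adjunctions `γ` to `A₂`. -/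
theorem ambijunction_aut_action_free_transitive {C D : Type*} [Category C] [Category D]
    {F : C ⥤ D} (A₁ A₂ : AmbidextrousAdjunction F) :
    ∃! α : F ≅ F, ∃ γ : A₁.right ≅ A₂.right,
      A₂.adj.unit = A₁.adj.unit ≫ Functor.whiskerLeft F γ.hom ∧
      A₂.adj.counit = Functor.whiskerRight γ.inv F ≫ A₁.adj.counit ∧
      A₂.coadj.unit = (A₁.coadj.unit ≫ Functor.whiskerLeft A₁.right α.hom) ≫ Functor.whiskerRight γ.hom F ∧
      A₂.coadj.counit =
        Functor.whiskerLeft F γ.inv ≫ (Functor.whiskerRight α.inv A₁.right ≫ A₁.coadj.counit) := by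
  set γ : A₁.right ≅ A₂.right := A₁.adj.rightAdjointUniq A₂.adj with hγdef
  set α : F ≅ F := Adjunction.rightAdjointUniq A₁.coadj (twistCoadj A₂.coadj γ) with hαdef
  have hK1 : A₁.coadj.unit ≫ Functor.whiskerLeft A₁.right α.hom = (twistCoadj A₂.coadj γ).unit :=
    Adjunction.unit_rightAdjointUniq_hom _ _
  have hK2 : Functor.whiskerRight α.hom A₁.right ≫ (twistCoadj A₂.coadj γ).counit = A₁.coadj.counit :=
    Adjunction.rightAdjointUniq_hom_counit _ _
  have hγ1 : A₂.adj.unit = A₁.adj.unit ≫ Functor.whiskerLeft F γ.hom :=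
    (Adjunction.unit_rightAdjointUniq_hom A₁.adj A₂.adj).symm
  -- the key component identity for α
  have hα : ∀ d : D, A₁.coadj.unit.app d ≫ α.hom.app (A₁.right.obj d) =
      A₂.coadj.unit.app d ≫ F.map (γ.inv.app d) := by
    intro d
    have := NatTrans.congr_app hK1 d
    simpa only [NatTrans.comp_app, Functor.whiskerLeft_app, Functor.whiskerRight_app, twistCoadj] using this
  refine ⟨α, ⟨γ, hγ1, ?_, ?_, ?_⟩, ?_⟩
  · rw [← Adjunction.rightAdjointUniq_hom_counit A₁.adj A₂.adj, ← hγdef]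
    ext d
    simp only [NatTrans.comp_app, Functor.whiskerRight_app, Functor.comp_obj, ← Category.assoc,
      ← Functor.map_comp, Iso.inv_hom_id_app]
    simp
  · rw [hK1]
    ext d
    simp only [twistCoadj, NatTrans.comp_app, Functor.whiskerRight_app, Functor.comp_obj,
      Category.assoc, ← Functor.map_comp, Iso.inv_hom_id_app]
    simp
  · rw [← hK2]
    ext X
    simp only [twistCoadj, NatTrans.comp_app, Functor.whiskerLeft_app, Functor.whiskerRight_app,
      Functor.comp_obj, Category.assoc]
    rw [← Functor.map_comp_assoc, Iso.inv_hom_id_app]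
    simp
  · rintro β ⟨δ, h1, h2, h3, h4⟩
    have hδ : δ = γ := by
      apply Iso.ext
      ext d
      rw [aux_right_adj_nat_eq A₁.adj A₂.adj δ.hom h1 d,
        aux_right_adj_nat_eq A₁.adj A₂.adj γ.hom hγ1 d]
    subst hδ
    have hβ : ∀ d : D, A₁.coadj.unit.app d ≫ β.hom.app (A₁.right.obj d) =
        A₂.coadj.unit.app d ≫ F.map (γ.inv.app d) := by
      intro d
      have h3d := NatTrans.congr_app h3 d
      simp only [NatTrans.comp_app, Functor.whiskerLeft_app, Functor.whiskerRight_app] at h3d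
      rw [h3d, Category.assoc, Category.assoc, ← Functor.map_comp, Iso.hom_inv_id_app]
      simp
    apply Iso.ext
    ext X
    rw [aux_self_nat_eq A₁.coadj β.hom X, aux_self_nat_eq A₁.coadj α.hom X,
      ← Category.assoc, ← Category.assoc, hβ (F.obj X), hα (F.obj X)]
end

section
/- Let k be a field, I a finite index type, σ : I ≃ I a permutation of I, V : I → Type a family of finite-dimensional k-vector spaces, and f : Π i, V i →ₗ[k] V (σ i) a family of linear maps. Let F : (⨁ i, V i) →ₗ[k] (⨁ i, V i) be the unique linear endomorphism of the direct sum whose restriction to the i-th summand is f i followed by the inclusion of the σ(i)-th summand. Then the trace of F localizes on the fixed points of σ: trace(F) = Σ_{i : σ i = i} trace(f i), where for a fixed point i of σ the map f i is regarded as an endomorphism of V i by transporting along the equality σ i = i. -/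
open DirectSum

private lemma cast_apply_aux {k : Type*} [Field k] {I : Type*}
    (V : I → Type*) [∀ i, AddCommGroup (V i)] [∀ i, Module k (V i)]
    {i j : I} (h : j = i) (g : V i →ₗ[k] V j) (v : V i) :
    (h ▸ (g v) : V i) = (cast (congrArg (fun t => V i →ₗ[k] V t) h) g) v := by
  subst h; rfl

private lemma dfinsupp_basis_lof {k : Type*} [Field k] {I : Type*} [DecidableEq I]
    (V : I → Type*) [∀ i, AddCommGroup (V i)] [∀ i, Module k (V i)]
    {η : I → Type*} (b : ∀ i, Module.Basis (η i) k (V i)) (i : I) (j : η i) :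
    (DFinsupp.basis b) ⟨i, j⟩ = DirectSum.lof k I V i (b i j) := by
  simp [DFinsupp.basis, DirectSum.lof, Module.Basis.ofRepr]
  rfl

/-- **Trace localizes on fixed points.**
Let `σ` be a permutation of a finite index type `I`, `V i` a family of finite-dimensional
`k`-vector spaces, and `f i : V i →ₗ[k] V (σ i)` a family of linear maps.  If
`F : (⨁ i, V i) →ₗ[k] (⨁ i, V i)` restricts on the `i`-th summand to `f i` followed by the
inclusion of the `σ i`-th summand, then
`trace F = ∑_{i : σ i = i} trace (f i)`, where for a fixed point `i` the map `f i` is regarded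
as an endomorphism of `V i` by transporting along `σ i = i`. -/
theorem trace_localizes_on_fixed_points
    {k : Type*} [Field k] {I : Type*} [Fintype I] [DecidableEq I]
    (σ : I ≃ I)
    (V : I → Type*) [∀ i, AddCommGroup (V i)] [∀ i, Module k (V i)]
    [∀ i, FiniteDimensional k (V i)]
    (f : ∀ i, V i →ₗ[k] V (σ i))
    (F : (⨁ i, V i) →ₗ[k] (⨁ i, V i))
    (hF : ∀ (i : I) (v : V i),
      F (DirectSum.lof k I V i v) = DirectSum.lof k I V (σ i) (f i v)) :
    LinearMap.trace k (⨁ i, V i) F =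
      ∑ i : {i : I // σ i = i},
        LinearMap.trace k (V i.1)
          (cast (congrArg (fun t => V i.1 →ₗ[k] V t) i.2) (f i.1)) := by
  classical
  let b : ∀ i, Module.Basis (Fin (Module.finrank k (V i))) k (V i) :=
    fun i => Module.finBasis k (V i)
  let B : Module.Basis (Σ i, Fin (Module.finrank k (V i))) k (⨁ i, V i) := DFinsupp.basis b
  have hBrepr : ∀ (x : ⨁ i, V i) (i j), B.repr x ⟨i, j⟩ = (b i).repr (x i) j :=
    fun _ _ _ => rfl
  -- diagonal contribution of block `i`
  set T : I → k := fun i =>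
    ∑ j, (b i).repr ((DirectSum.lof k I V (σ i) (f i (b i j))) i) j with hT
  have htrace : LinearMap.trace k (⨁ i, V i) F = ∑ i, T i := by
    rw [LinearMap.trace_eq_matrix_trace k B, Matrix.trace, Finset.sum_sigma']
    refine Finset.sum_congr rfl fun p _ => ?_
    obtain ⟨i, j⟩ := p
    rw [Matrix.diag_apply, LinearMap.toMatrix_apply,
      show B ⟨i, j⟩ = DirectSum.lof k I V i (b i j) from dfinsupp_basis_lof V b i j,
      hF, hBrepr]
  have hzero : ∀ i, σ i ≠ i → T i = 0 := by
    intro i hi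
    rw [hT]
    refine Finset.sum_eq_zero fun j _ => ?_
    have : (DirectSum.lof k I V (σ i) (f i (b i j))) i = 0 :=
      DFinsupp.single_eq_of_ne (Ne.symm hi)
    rw [this, map_zero, Finsupp.zero_apply]
  have hfix : ∀ (i : I) (h : σ i = i),
      T i = LinearMap.trace k (V i)
        (cast (congrArg (fun t => V i →ₗ[k] V t) h) (f i)) := by
    intro i h
    rw [LinearMap.trace_eq_matrix_trace k (b i), Matrix.trace, hT]
    refine Finset.sum_congr rfl fun j _ => ?_
    rw [Matrix.diag_apply, LinearMap.toMatrix_apply]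
    congr 1
    have : (DirectSum.lof k I V (σ i) (f i (b i j))) i = h ▸ (f i (b i j)) :=
      DFinsupp.single_apply.trans (by rw [dif_pos h])
    rw [this, cast_apply_aux]
  rw [htrace, ← Finset.sum_filter_of_ne (p := fun i => σ i = i)
    (fun i _ hne => by by_contra hc; exact hne (hzero i hc)),
    Finset.sum_subtype (p := fun i => σ i = i) (Finset.univ.filter fun i => σ i = i)
      (fun i => by simp) T]
  exact Finset.sum_congr rfl fun i _ => hfix i.1 i.2
end

section
/- Let G be a group. Define a category E(G) whose objects are pairs (F, u) where F is a ℂ-linear additive endofunctor of the category of finite-dimensional complex vector spaces and u : G →* Aut(F) is a group homomorphism from G to the group of natural automorphisms of F, and whose morphisms (F, u) → (F', u') are natural transformations θ : F ⟶ F' satisfying θ ∘ u(g) = u'(g) ∘ θ for all g ∈ G. Then E(G) is equivalent to the category of finite-dimensional complex representations of G. (This realizes the endomorphism category of the trivial unitary 2-representation of G as Rep(G).) -/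
open CategoryTheory MonoidalCategory

noncomputable section
abbrev Cu : FGModuleCat ℂ := 𝟙_ (FGModuleCat ℂ)

lemma hom_add_apply {M N : FGModuleCat ℂ} (f g : M ⟶ N) (x : M) : (f + g) x = f x + g x := rfl
lemma hom_smul_apply {M N : FGModuleCat ℂ} (c : ℂ) (f : M ⟶ N) (x : M) : (c • f) x = c • f x := rfl
lemma hom_sum_apply {ι : Type} {M N : FGModuleCat ℂ} (s : Finset ι) (f : ι → (M ⟶ N)) (x : M) :
    (∑ i ∈ s, f i) x = ∑ i ∈ s, f i x := by
  classical
  induction s using Finset.cons_induction with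
  | empty => rfl
  | cons a s ha ih => rw [Finset.sum_cons, Finset.sum_cons, hom_add_apply, ih]

variable (F : FGModuleCat ℂ ⥤ FGModuleCat ℂ) [F.Additive] [F.Linear ℂ]

def spanHom {W : FGModuleCat ℂ} (w : W) : Cu ⟶ W :=
  ConcreteCategory.ofHom (C := FGModuleCat ℂ) (LinearMap.toSpanSingleton ℂ W w)

@[simp] lemma spanHom_apply {W : FGModuleCat ℂ} (w : W) (c : ℂ) : spanHom w c = c • w := rfl

lemma spanHom_add {W : FGModuleCat ℂ} (w w' : W) :
    spanHom (w + w') = spanHom w + spanHom w' := by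
  refine ConcreteCategory.hom_ext _ _ fun (c : ℂ) => ?_
  show c • (w + w') = c • w + c • w'
  exact smul_add c w w'

lemma spanHom_smul {W : FGModuleCat ℂ} (c : ℂ) (w : W) :
    spanHom (c • w) = c • spanHom w := by
  refine ConcreteCategory.hom_ext _ _ fun (a : ℂ) => ?_
  show a • (c • w) = c • (a • w)
  exact smul_comm a c w

lemma spanHom_comp {W W' : FGModuleCat ℂ} (f : W ⟶ W') (w : W) :
    spanHom w ≫ f = spanHom (f w) := by
  refine ConcreteCategory.hom_ext _ _ fun (c : ℂ) => ?_
  show f (c • w) = c • f w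
  exact map_smul f.hom.hom c w

def evalBlin (W : FGModuleCat ℂ) : W →ₗ[ℂ] (F.obj Cu →ₗ[ℂ] F.obj W) where
  toFun w := (F.map (spanHom w)).hom.hom
  map_add' w w' := by
    show (F.map (spanHom (w + w'))).hom.hom = (F.map (spanHom w)).hom.hom + (F.map (spanHom w')).hom.hom
    rw [spanHom_add, F.map_add]; rfl
  map_smul' c w := by
    show (F.map (spanHom (c • w))).hom.hom = c • (F.map (spanHom w)).hom.hom
    rw [spanHom_smul, F.map_smul]; rfl

def evalHom (W : FGModuleCat ℂ) : (W ⊗ F.obj Cu : FGModuleCat ℂ) ⟶ F.obj W :=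
  ConcreteCategory.ofHom (C := FGModuleCat ℂ) (TensorProduct.lift (evalBlin F W))

@[simp] lemma evalHom_tmul (W : FGModuleCat ℂ) (w : W) (x : F.obj Cu) :
    evalHom F W (w ⊗ₜ x) = F.map (spanHom w) x := rfl

@[simp] lemma fg_comp_apply {M N P : FGModuleCat ℂ} (f : M ⟶ N) (g : N ⟶ P) (x : M) :
    (f ≫ g) x = g (f x) := rfl

@[simp] lemma fg_id_apply {M : FGModuleCat ℂ} (x : M) : (𝟙 M : M ⟶ M) x = x := rfl

section basisStuff

variable {W : FGModuleCat ℂ}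

def coordHom (b : Module.Basis (Fin n) ℂ W) (i : Fin n) : W ⟶ Cu := ConcreteCategory.ofHom (C := FGModuleCat ℂ) (b.coord i)

def mkHom (W : FGModuleCat ℂ) (w : W) : F.obj Cu ⟶ (W ⊗ F.obj Cu : FGModuleCat ℂ) :=
  ConcreteCategory.ofHom (C := FGModuleCat ℂ) (TensorProduct.mk ℂ W (F.obj Cu) w)

@[simp] lemma mkHom_apply (w : W) (x : F.obj Cu) : mkHom F W w x = w ⊗ₜ x := rfl

lemma sum_coord_span {n : ℕ} (b : Module.Basis (Fin n) ℂ W) :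
    ∑ i, coordHom b i ≫ spanHom (b i) = 𝟙 W := by
  refine ConcreteCategory.hom_ext _ _ fun (w : W) => ?_
  rw [hom_sum_apply]
  show ∑ i, (b.repr w i) • b i = w
  exact b.sum_repr w

lemma spanHom_coord {n : ℕ} (b : Module.Basis (Fin n) ℂ W) (w : W) (i : Fin n) :
    spanHom w ≫ coordHom b i = (b.repr w i) • 𝟙 Cu := by
  refine ConcreteCategory.hom_ext _ _ fun (c : ℂ) => ?_
  show b.repr (c • w) i = b.repr w i • c
  rw [map_smul]
  exact mul_comm c _

end basisStuff

def evalInv (W : FGModuleCat ℂ) : F.obj W ⟶ (W ⊗ F.obj Cu : FGModuleCat ℂ) :=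
  let b := Module.finBasis ℂ W
  ∑ i, F.map (coordHom b i) ≫ mkHom F W (b i)

lemma mkHom_evalHom {W : FGModuleCat ℂ} (w : W) :
    mkHom F W w ≫ evalHom F W = F.map (spanHom w) :=
  ConcreteCategory.hom_ext _ _ fun _ => rfl

lemma evalInv_evalHom (W : FGModuleCat ℂ) : evalInv F W ≫ evalHom F W = 𝟙 (F.obj W) := by
  rw [evalInv, Preadditive.sum_comp]
  have : ∀ i, (F.map (coordHom (Module.finBasis ℂ W) i) ≫
      mkHom F W (Module.finBasis ℂ W i)) ≫ evalHom F W
      = F.map (coordHom (Module.finBasis ℂ W) i ≫ spanHom (Module.finBasis ℂ W i)) := by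
    intro i
    rw [Category.assoc, mkHom_evalHom, ← F.map_comp]
  rw [Finset.sum_congr rfl (fun i _ => this i), ← F.map_sum, sum_coord_span, F.map_id]

lemma evalHom_evalInv (W : FGModuleCat ℂ) :
    evalHom F W ≫ evalInv F W = 𝟙 (W ⊗ F.obj Cu : FGModuleCat ℂ) := by
  refine FGModuleCat.hom_ext <| TensorProduct.ext' fun w x => ?_
  set b := Module.finBasis ℂ W with hb
  show evalInv F W (evalHom F W (w ⊗ₜ x)) = w ⊗ₜ x
  rw [evalHom_tmul]
  show (∑ i, F.map (coordHom b i) ≫ mkHom F W (b i)) (F.map (spanHom w) x) = w ⊗ₜ x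
  rw [hom_sum_apply]
  have h1 : ∀ i, (F.map (coordHom b i) ≫ mkHom F W (b i)) (F.map (spanHom w) x)
      = (b.repr w i) • ((b i : W) ⊗ₜ x) := by
    intro i
    have hc : F.map (spanHom w) ≫ F.map (coordHom b i) = (b.repr w i) • 𝟙 (F.obj Cu) := by
      rw [← F.map_comp, spanHom_coord, Functor.map_smul, F.map_id]
    calc (F.map (coordHom b i) ≫ mkHom F W (b i)) (F.map (spanHom w) x)
        = mkHom F W (b i) ((F.map (spanHom w) ≫ F.map (coordHom b i)) x) := rfl
      _ = mkHom F W (b i) (((b.repr w i) • 𝟙 (F.obj Cu)) x) := by rw [hc]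
      _ = (b.repr w i) • ((b i : W) ⊗ₜ x) := by
          rw [hom_smul_apply]
          simp [TensorProduct.tmul_smul]
  rw [Finset.sum_congr rfl (fun i _ => h1 i)]
  have : ∀ i, (b.repr w i) • ((b i : W) ⊗ₜ x) = ((b.repr w i • b i : W) ⊗ₜ x
      : TensorProduct ℂ W (F.obj Cu)) := fun i => by
    rw [TensorProduct.smul_tmul']
  rw [Finset.sum_congr rfl (fun i _ => this i), ← TensorProduct.sum_tmul, b.sum_repr]

instance evalHom_isIso (W : FGModuleCat ℂ) : IsIso (evalHom F W) :=
  ⟨evalInv F W, evalHom_evalInv F W, evalInv_evalHom F W⟩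

lemma evalHom_naturality {W W' : FGModuleCat ℂ} (f : W ⟶ W') :
    (f ▷ F.obj Cu) ≫ evalHom F W' = evalHom F W ≫ F.map f := by
  refine FGModuleCat.hom_ext <| TensorProduct.ext' fun w x => ?_
  show evalHom F W' ((f ▷ F.obj Cu) (w ⊗ₜ x)) = F.map f (evalHom F W (w ⊗ₜ x))
  have h1 : (f ▷ F.obj Cu) (w ⊗ₜ x) = (f w ⊗ₜ x : TensorProduct ℂ W' (F.obj Cu)) := rfl
  rw [h1, evalHom_tmul, evalHom_tmul, ← fg_comp_apply, ← F.map_comp, spanHom_comp]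

lemma evalHom_natTrans {F' : FGModuleCat ℂ ⥤ FGModuleCat ℂ} [F'.Additive] [F'.Linear ℂ]
    (θ : F ⟶ F') (W : FGModuleCat ℂ) :
    evalHom F W ≫ θ.app W = (W ◁ θ.app Cu) ≫ evalHom F' W := by
  refine FGModuleCat.hom_ext <| TensorProduct.ext' fun w x => ?_
  show (F.map (spanHom w) ≫ θ.app W) x = (θ.app Cu ≫ F'.map (spanHom w)) x
  rw [θ.naturality]

lemma spanHom_self (c : ℂ) : spanHom (W := Cu) c = c • 𝟙 Cu := by
  refine ConcreteCategory.hom_ext _ _ fun (a : ℂ) => ?_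
  show a • c = c • a
  exact mul_comm a c

lemma evalHom_unit_comm {F' : FGModuleCat ℂ ⥤ FGModuleCat ℂ} [F'.Additive] [F'.Linear ℂ]
    (φ : F.obj Cu ⟶ F'.obj Cu) :
    (Cu ◁ φ) ≫ evalHom F' Cu = evalHom F Cu ≫ φ := by
  refine FGModuleCat.hom_ext <| TensorProduct.ext' fun c x => ?_
  show F'.map (spanHom c) (φ x) = φ (F.map (spanHom c) x)
  rw [spanHom_self, Functor.map_smul, Functor.map_smul, F.map_id, F'.map_id]
  show c • φ x = φ (c • x)
  exact (map_smul φ.hom.hom c x).symm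


/-- An object of the endomorphism category of the trivial unitary 2-representation of `G`:
a ℂ-linear additive endofunctor `F` of the category of finite-dimensional complex vector
spaces, together with a group homomorphism `u : G →* Aut F` from `G` to the group of natural
automorphisms of `F`. -/
structure TwoRepEnd (G : Type) [Group G] where
  /-- the underlying endofunctor -/
  F : FGModuleCat ℂ ⥤ FGModuleCat ℂ
  /-- `F` is additive -/
  additive : F.Additive
  /-- `F` is ℂ-linear on hom-spaces -/
  linear : F.Linear ℂ
  /-- the coherent action of `G` on `F` by natural automorphisms -/
  u : G →* Aut F

variable {G : Type} [Group G]

instance : Category (TwoRepEnd G) where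
  Hom A B := {θ : A.F ⟶ B.F // ∀ g : G, (A.u g).hom ≫ θ = θ ≫ (B.u g).hom}
  id A := ⟨𝟙 A.F, fun g => by simp⟩
  comp {A B C} f g := ⟨f.1 ≫ g.1, fun k => by
    rw [← Category.assoc, f.2 k, Category.assoc, g.2 k, Category.assoc]⟩
  id_comp f := Subtype.ext (Category.id_comp f.1)
  comp_id f := Subtype.ext (Category.comp_id f.1)
  assoc f g h := Subtype.ext (Category.assoc f.1 g.1 h.1)

def toFDRep : TwoRepEnd G ⥤ FDRep ℂ G where
  obj A :=
    { V := A.F.obj Cu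
      ρ :=
        { toFun := fun g => ((A.u g).hom.app Cu : End (A.F.obj Cu))
          map_one' := by
            show (A.u 1).hom.app Cu = 𝟙 (A.F.obj Cu)
            rw [map_one]
            rfl
          map_mul' := fun g h => by
            show (A.u (g * h)).hom.app Cu =
              ((A.u h).hom.app Cu ≫ (A.u g).hom.app Cu : End (A.F.obj Cu))
            rw [map_mul, Aut.Aut_mul_def]
            rfl } }
  map {A B} θ :=
    { hom := θ.1.app Cu
      comm := fun g => NatTrans.congr_app (θ.2 g) Cu }
  map_id A := by apply Action.hom_ext; rfl
  map_comp f g := by apply Action.hom_ext; rfl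

instance : (toFDRep (G := G)).Faithful where
  map_injective {A B} {θ θ'} h := by
    haveI := A.additive; haveI := A.linear; haveI := B.additive; haveI := B.linear
    have hc : θ.1.app Cu = θ'.1.app Cu := congrArg Action.Hom.hom h
    apply Subtype.ext
    apply NatTrans.ext
    funext W
    have h1 := evalHom_natTrans A.F θ.1 W
    have h2 := evalHom_natTrans A.F θ'.1 W
    have : evalHom A.F W ≫ θ.1.app W = evalHom A.F W ≫ θ'.1.app W := by
      rw [h1, h2, hc]
    exact (cancel_epi (evalHom A.F W)).mp this

instance : (toFDRep (G := G)).Full where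
  map_surjective {A B} f := by
    haveI := A.additive; haveI := A.linear; haveI := B.additive; haveI := B.linear
    obtain ⟨φ, hφ⟩ : ∃ φ' : A.F.obj Cu ⟶ B.F.obj Cu, φ' = f.hom := ⟨f.hom, rfl⟩
    refine ⟨⟨{ app := fun W => inv (evalHom A.F W) ≫ (W ◁ φ) ≫ evalHom B.F W
               naturality := ?_ }, ?_⟩, ?_⟩
    · intro W W' k
      rw [← cancel_epi (evalHom A.F W)]
      rw [← Category.assoc, ← evalHom_naturality A.F k]
      simp only [Category.assoc, IsIso.hom_inv_id_assoc]
      rw [← whisker_exchange_assoc, ← evalHom_naturality B.F k]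
    · intro g
      apply NatTrans.ext
      funext W
      show (A.u g).hom.app W ≫ inv (evalHom A.F W) ≫ (W ◁ φ) ≫ evalHom B.F W
        = (inv (evalHom A.F W) ≫ (W ◁ φ) ≫ evalHom B.F W) ≫ (B.u g).hom.app W
      rw [← cancel_epi (evalHom A.F W)]
      rw [← Category.assoc, evalHom_natTrans A.F (A.u g).hom W]
      simp only [Category.assoc, IsIso.hom_inv_id_assoc]
      rw [← MonoidalCategory.whiskerLeft_comp_assoc]
      have hcomm : (A.u g).hom.app Cu ≫ φ = φ ≫ (B.u g).hom.app Cu := by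
        rw [hφ]; exact f.comm g
      rw [hcomm, MonoidalCategory.whiskerLeft_comp_assoc,
        ← evalHom_natTrans B.F (B.u g).hom W]
    · apply Action.hom_ext
      show inv (evalHom A.F Cu) ≫ (Cu ◁ φ) ≫ evalHom B.F Cu = f.hom
      rw [evalHom_unit_comm A.F φ, IsIso.inv_hom_id_assoc, hφ]

def ofRep (X : FDRep ℂ G) : TwoRepEnd G where
  F := (tensoringRight (FGModuleCat ℂ)).obj X.V
  additive := inferInstance
  linear := inferInstance
  u := (Functor.mapAut X.V (tensoringRight (FGModuleCat ℂ))).comp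
    (Action.ρAut X)

lemma ofRep_rho (X : FDRep ℂ G) (g : G) :
    Action.ρ (toFDRep.obj (ofRep X)) g = (Cu ◁ Action.ρ X g) := rfl



noncomputable def ofRepIso (X : FDRep ℂ G) : toFDRep.obj (ofRep X) ≅ X :=
  Action.mkIso (λ_ X.V) fun g => by
    refine Eq.trans (congrArg (· ≫ (λ_ X.V).hom) ?_)
      (MonoidalCategory.leftUnitor_naturality (Action.ρ X g))
    exact ofRep_rho X g

instance : (toFDRep (G := G)).EssSurj where
  mem_essImage X := ⟨ofRep X, ⟨ofRepIso X⟩⟩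

/-- **The endomorphism category of the trivial 2-representation is `Rep(G)`.**
The category of pairs `(F, u)`, where `F` is a ℂ-linear additive endofunctor of the category
of finite-dimensional complex vector spaces and `u : G →* Aut F`, with morphisms the natural
transformations commuting with the `G`-actions, is equivalent to the category of
finite-dimensional complex representations of `G`. -/
theorem twoRepEnd_equivalence_fdRep :
    Nonempty (TwoRepEnd G ≌ FDRep ℂ G) := by
  haveI : (toFDRep (G := G)).IsEquivalence := {}
  exact ⟨toFDRep.asEquivalence⟩

end
end

section
/- Let G be a finite group acting on a finite set X. Let P := {(i, x) ∈ X × G | x • i = i} with the G-action g • (i, x) := (g • i, g x g⁻¹), and let L be a functor from the action groupoid of G acting on P to the category of finite-dimensional complex vector spaces. For x ∈ G define ch(x) := ⨁_{i ∈ X, x • i = i} L(i, x), and for g ∈ G define a linear map ch(g)_x : ch(x) → ch(gxg⁻¹) whose restriction to the (i)-th summand is the map L applied to the morphism g : (i, x) → (g • i, g x g⁻¹) of the action groupoid, followed by inclusion of the (g • i)-th summand. Then ch(1)_x is the identity and ch(g₂)_{g₁ x g₁⁻¹} ∘ ch(g₁)_x = ch(g₂g₁)_x for all g₁, g₂, x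 ∈ G; that is, the push-forward x ↦ ch(x) together with the maps ch(g) defines a functor from the action groupoid of G acting on itself by conjugation to the category of finite-dimensional complex vector spaces (an equivariant vector bundle over G). -/
open CategoryTheory DirectSum

/-- The set `P` of pairs `(i, x)` with `x • i = i`, for a group `G` acting on a set `X`. -/
abbrev PFix (G X : Type) [Group G] [MulAction G X] : Type := {p : X × G // p.2 • p.1 = p.1}

variable {G X : Type} [Group G] [Fintype G] [Fintype X] [DecidableEq X] [MulAction G X]

/-- The `G`-action `g • (i, x) := (g • i, g x g⁻¹)` on `P`. -/
instance : SMul G (PFix G X) :=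
  ⟨fun g p => ⟨(g • p.1.1, g * p.1.2 * g⁻¹), by rw [mul_smul, inv_smul_smul, mul_smul, p.2]⟩⟩

lemma pfix_smul_def (g : G) (p : PFix G X) :
    (g • p : PFix G X).1 = (g • p.1.1, g * p.1.2 * g⁻¹) := rfl

instance : MulAction G (PFix G X) where
  one_smul p := Subtype.ext (by rw [pfix_smul_def]; simp)
  mul_smul g h p := Subtype.ext (by
    rw [pfix_smul_def, pfix_smul_def, pfix_smul_def]
    simp [mul_smul, mul_assoc])

/-- The fixed points of `x : G` acting on `X`. -/
abbrev FixPts (x : G) (X : Type) [MulAction G X] : Type := {i : X // x • i = i}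

variable (L : ActionCategory G (PFix G X) ⥤ FGModuleCat ℂ)

/-- The object of the action groupoid of `P` corresponding to a fixed point `i` of `x`. -/
def pobj (x : G) (i : FixPts x X) : ActionCategory G (PFix G X) :=
  ActionCategory.objEquiv G (PFix G X) ⟨(i.1, x), i.2⟩

/-- The fiber `ch(x) = ⨁_{i ∈ X, x • i = i} L (i, x)` of the geometric character. -/
def ch (x : G) : Type := ⨁ (i : FixPts x X), ↑(L.obj (pobj x i))

noncomputable instance (x : G) : AddCommGroup (ch L x) := by unfold ch; infer_instance
noncomputable instance (x : G) : Module ℂ (ch L x) := by unfold ch; infer_instance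

/-- `g` maps fixed points of `x` to fixed points of `g x g⁻¹`. -/
def fixConj (g x : G) (i : FixPts x X) : FixPts (g * x * g⁻¹) X :=
  ⟨g • i.1, by rw [mul_smul, inv_smul_smul, mul_smul, i.2]⟩

/-- The morphism `g : (i, x) → (g • i, g x g⁻¹)` of the action groupoid of `P`. -/
def actHom (g x : G) (i : FixPts x X) :
    pobj x i ⟶ pobj (g * x * g⁻¹) (fixConj g x i) :=
  ⟨g, Subtype.ext rfl⟩

/-- The linear map `ch(g)_x : ch(x) → ch(g x g⁻¹)` whose restriction to the `i`-th summand
is `L` applied to the morphism `g : (i, x) → (g • i, g x g⁻¹)` of the action groupoid,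
followed by the inclusion of the `g • i`-th summand. -/
noncomputable def chMap (g x : G) : ch L x →ₗ[ℂ] ch L (g * x * g⁻¹) :=
  DirectSum.toModule ℂ (FixPts x X) (ch L (g * x * g⁻¹)) fun i =>
    (DirectSum.lof ℂ (FixPts (g * x * g⁻¹) X)
        (fun j => ↑(L.obj (pobj (g * x * g⁻¹) j))) (fixConj g x i)).comp
      ((L.map (actHom g x i)).hom.hom :
        ↑(L.obj (pobj x i)) →ₗ[ℂ] ↑(L.obj (pobj (g * x * g⁻¹) (fixConj g x i))))

section Aux

/-- Cast between fibers `ch L x` along an equality in `G`. -/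
noncomputable def castL {x y : G} (h : x = y) : ch L x →ₗ[ℂ] ch L y :=
  h ▸ (LinearMap.id : ch L x →ₗ[ℂ] ch L x)

lemma heq_of_castL_comp {a x y : G} (h : x = y) {f : ch L a →ₗ[ℂ] ch L x}
    {g : ch L a →ₗ[ℂ] ch L y} (H : (castL L h).comp f = g) : HEq f g := by
  subst h
  subst H
  exact heq_of_eq (by ext v; rfl)

lemma castL_lof {x y : G} (h : x = y) {i : FixPts x X} {j : FixPts y X}
    (hij : HEq i j) {v : ↑(L.obj (pobj x i))} {w : ↑(L.obj (pobj y j))} (hvw : HEq v w) :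
    castL L h (DirectSum.lof ℂ (FixPts x X) (fun k => ↑(L.obj (pobj x k))) i v) =
      DirectSum.lof ℂ (FixPts y X) (fun k => ↑(L.obj (pobj y k))) j w := by
  subst h
  cases hij
  cases hvw
  rfl

lemma L_map_apply_heq {a b b' : ActionCategory G (PFix G X)} (hb : b = b')
    {f : a ⟶ b} {f' : a ⟶ b'} (hf : HEq f f') (v : ↑(L.obj a)) :
    HEq ((L.map f) v) ((L.map f') v) := by
  subst hb
  cases hf
  rfl

lemma pobj_eq {x y : G} (h : x = y) {i : FixPts x X} {j : FixPts y X}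
    (hij : (i : X) = (j : X)) : pobj x i = pobj y j := by
  subst h
  cases Subtype.ext hij
  rfl

lemma hom_heq {a b b' : ActionCategory G (PFix G X)} (hb : b = b')
    {f : a ⟶ b} {f' : a ⟶ b'} (hval : f.val = f'.val) : HEq f f' := by
  subst hb
  exact heq_of_eq (Subtype.ext hval)

end Aux

/-- **Functoriality of the geometric character.**
`ch(1)_x` is the identity and `ch(g₂)_{g₁ x g₁⁻¹} ∘ ch(g₁)_x = ch(g₂ g₁)_x`; that is, the
push-forward `x ↦ ch(x)` together with the maps `ch(g)` defines a functor from the action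
groupoid of `G` acting on itself by conjugation to the category of finite-dimensional
complex vector spaces (an equivariant vector bundle over `G`). -/
theorem geometric_character_functorial :
    (∀ x : G, HEq (chMap L 1 x) (LinearMap.id : ch L x →ₗ[ℂ] ch L x)) ∧
    (∀ g₂ g₁ x : G,
      HEq ((chMap L g₂ (g₁ * x * g₁⁻¹)).comp (chMap L g₁ x)) (chMap L (g₂ * g₁) x)) := by
  constructor
  · intro x
    have h : (1 : G) * x * 1⁻¹ = x := by group
    apply heq_of_castL_comp L h
    refine DirectSum.linearMap_ext _ fun i => LinearMap.ext fun v => ?_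
    have hb : pobj ((1:G) * x * 1⁻¹) (fixConj 1 x i) = pobj x i :=
      pobj_eq h (by simp [fixConj])
    have hi : HEq (fixConj (1:G) x i) i := by
      rw [Subtype.heq_iff_coe_eq (fun k => by rw [h])]
      simp [fixConj]
    have hf : HEq (actHom (1:G) x i) (𝟙 (pobj x i)) := hom_heq hb rfl
    have hv : HEq ((L.map (actHom (1:G) x i)) v) v := by
      refine (L_map_apply_heq L hb hf v).trans ?_
      rw [L.map_id]
      exact heq_of_eq rfl
    have e : chMap L 1 x (DirectSum.lof ℂ (FixPts x X) (fun k => ↑(L.obj (pobj x k))) i v) =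
        DirectSum.lof ℂ (FixPts ((1:G) * x * 1⁻¹) X) (fun k => ↑(L.obj (pobj ((1:G) * x * 1⁻¹) k)))
          (fixConj 1 x i) ((L.map (actHom (1:G) x i)) v) := by
      unfold chMap; exact DirectSum.toModule_lof ℂ (M := fun k => ↑(L.obj (pobj x k))) i v
    exact (congrArg (castL L h) e).trans (castL_lof L h hi hv)
  · intro g₂ g₁ x
    have h : g₂ * (g₁ * x * g₁⁻¹) * g₂⁻¹ = (g₂ * g₁) * x * (g₂ * g₁)⁻¹ := by group
    apply heq_of_castL_comp L h
    refine DirectSum.linearMap_ext _ fun i => LinearMap.ext fun v => ?_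
    have hb : pobj (g₂ * (g₁ * x * g₁⁻¹) * g₂⁻¹) (fixConj g₂ _ (fixConj g₁ x i)) =
        pobj ((g₂ * g₁) * x * (g₂ * g₁)⁻¹) (fixConj (g₂ * g₁) x i) :=
      pobj_eq h (by simp [fixConj, mul_smul])
    have hi : HEq (fixConj g₂ (g₁ * x * g₁⁻¹) (fixConj g₁ x i)) (fixConj (g₂ * g₁) x i) := by
      rw [Subtype.heq_iff_coe_eq (fun k => by rw [h])]
      simp [fixConj, mul_smul]
    have hf : HEq (actHom g₁ x i ≫ actHom g₂ (g₁ * x * g₁⁻¹) (fixConj g₁ x i))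
        (actHom (g₂ * g₁) x i) := hom_heq hb rfl
    have hv : HEq ((L.map (actHom g₂ (g₁ * x * g₁⁻¹) (fixConj g₁ x i)))
          ((L.map (actHom g₁ x i)) v))
        ((L.map (actHom (g₂ * g₁) x i)) v) := by
      refine HEq.trans ?_ (L_map_apply_heq L hb hf v)
      rw [L.map_comp]
      exact heq_of_eq rfl
    have e1 : chMap L g₁ x (DirectSum.lof ℂ (FixPts x X) (fun k => ↑(L.obj (pobj x k))) i v) =
        DirectSum.lof ℂ (FixPts (g₁ * x * g₁⁻¹) X) (fun k => ↑(L.obj (pobj (g₁ * x * g₁⁻¹) k)))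
          (fixConj g₁ x i) ((L.map (actHom g₁ x i)) v) := by
      unfold chMap; exact DirectSum.toModule_lof ℂ (M := fun k => ↑(L.obj (pobj x k))) i v
    have e2 : chMap L g₂ (g₁ * x * g₁⁻¹) (DirectSum.lof ℂ (FixPts (g₁ * x * g₁⁻¹) X)
          (fun k => ↑(L.obj (pobj (g₁ * x * g₁⁻¹) k))) (fixConj g₁ x i) ((L.map (actHom g₁ x i)) v)) =
        DirectSum.lof ℂ (FixPts (g₂ * (g₁ * x * g₁⁻¹) * g₂⁻¹) X)
          (fun k => ↑(L.obj (pobj (g₂ * (g₁ * x * g₁⁻¹) * g₂⁻¹) k)))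
          (fixConj g₂ (g₁ * x * g₁⁻¹) (fixConj g₁ x i))
          ((L.map (actHom g₂ (g₁ * x * g₁⁻¹) (fixConj g₁ x i))) ((L.map (actHom g₁ x i)) v)) := by
      unfold chMap; exact DirectSum.toModule_lof ℂ (M := fun k => ↑(L.obj (pobj (g₁ * x * g₁⁻¹) k))) (fixConj g₁ x i) ((L.map (actHom g₁ x i)) v)
    have e3 : chMap L (g₂ * g₁) x (DirectSum.lof ℂ (FixPts x X) (fun k => ↑(L.obj (pobj x k))) i v) =
        DirectSum.lof ℂ (FixPts ((g₂ * g₁) * x * (g₂ * g₁)⁻¹) X)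
          (fun k => ↑(L.obj (pobj ((g₂ * g₁) * x * (g₂ * g₁)⁻¹) k)))
          (fixConj (g₂ * g₁) x i) ((L.map (actHom (g₂ * g₁) x i)) v) := by
      unfold chMap; exact DirectSum.toModule_lof ℂ (M := fun k => ↑(L.obj (pobj x k))) i v
    exact (congrArg (castL L h) ((congrArg (chMap L g₂ (g₁ * x * g₁⁻¹)) e1).trans e2)).trans
      ((castL_lof L h hi hv).trans e3.symm)
end
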